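/- For any set of positions P of R and any character α, δ(P,α) equals the union over all v ∈ N⊙(P,α) of δ⊙(v,α) together with the union over all u ∈ N∗(P,α) of δ∗(u,α). -/
import Mathlib


/-- Non-empty regular expressions over alphabet `α`, identified with their parse trees. -/
inductive RE (α : Type) : Type where
  | eps : RE α
  | ch : α → RE α
  | cat : RE α → RE α → RE α
  | alt : RE α → RE α → RE α
  | star : RE α → RE α

/-- Child directions in the parse tree (a `star`-node only has an `L` child). -/
inductive Dir : Type where
  | L : Dir
  | R : Dir
  deriving DecidableEq

/-- A node of the parse tree is identified with the path from the root to it. -/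
abbrev TreePath : Type := List Dir

namespace RE

variable {α : Type}

/-- The subexpression of `R` rooted at the node reached by following path `v`
(`none` if no such node exists). -/
def sub : RE α → TreePath → Option (RE α)
  | r, [] => some r
  | .cat r _, .L :: p => sub r p
  | .cat _ s, .R :: p => sub s p
  | .alt r _, .L :: p => sub r p
  | .alt _ s, .R :: p => sub s p
  | .star r, .L :: p => sub r p
  | _, _ => none

/-- `v` is a node of the parse tree of `R`. -/
def IsNode (R : RE α) (v : TreePath) : Prop := ∃ r, R.sub v = some r

/-- The label of a position (character leaf); `none` if `p` is not a position. -/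
def labelOf (R : RE α) (p : TreePath) : Option α :=
  match R.sub p with
  | some (.ch a) => some a
  | _ => none

/-- `p` is a position of `R`, i.e. a leaf labeled by a character. -/
def IsPos (R : RE α) (p : TreePath) : Prop := ∃ a, R.labelOf p = some a

/-- `v` is a `⊙`-node (concatenation node). -/
def IsCatNode (R : RE α) (v : TreePath) : Prop := ∃ r s, R.sub v = some (.cat r s)

/-- `v` is a `∗`-node (Kleene-star node). -/
def IsStarNode (R : RE α) (v : TreePath) : Prop := ∃ r, R.sub v = some (.star r)

/-- `PosSeq r w` holds when `w` is a sequence of (paths to) positions of `r`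
whose labels spell some string of `L(r)`. -/
inductive PosSeq : RE α → List TreePath → Prop where
  | eps : PosSeq .eps []
  | ch (a : α) : PosSeq (.ch a) [[]]
  | cat {r s : RE α} {u v : List TreePath} : PosSeq r u → PosSeq s v →
      PosSeq (.cat r s) (u.map (Dir.L :: ·) ++ v.map (Dir.R :: ·))
  | altL {r s : RE α} {u : List TreePath} : PosSeq r u → PosSeq (.alt r s) (u.map (Dir.L :: ·))
  | altR {r s : RE α} {v : List TreePath} : PosSeq s v → PosSeq (.alt r s) (v.map (Dir.R :: ·))
  | starNil {r : RE α} : PosSeq (.star r) []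
  | starCons {r : RE α} {u w : List TreePath} : PosSeq r u → PosSeq (.star r) w →
      PosSeq (.star r) (u.map (Dir.L :: ·) ++ w)

/-- `first(v)`: the positions (as paths in `R`) that occur first in a position
sequence of the subexpression rooted at `v`. -/
def firstSet (R : RE α) (v : TreePath) : Set TreePath :=
  {p | ∃ r, R.sub v = some r ∧ ∃ p' w, PosSeq r (p' :: w) ∧ p = v ++ p'}

/-- `last(v)`: the positions (as paths in `R`) that occur last in a position
sequence of the subexpression rooted at `v`. -/
def lastSet (R : RE α) (v : TreePath) : Set TreePath :=
  {p | ∃ r, R.sub v = some r ∧ ∃ w p', PosSeq r (w ++ [p']) ∧ p = v ++ p'}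

/-- `follow(R,p)`: the positions that can follow `p` in a position sequence of `R`. -/
def followSet (R : RE α) (p : TreePath) : Set TreePath :=
  {q | ∃ w₁ w₂, PosSeq R (w₁ ++ p :: q :: w₂)}

/-- `firstextent(p) = {v : p ∈ first(v)}`. -/
def firstExtent (R : RE α) (p : TreePath) : Set TreePath := {v | p ∈ R.firstSet v}

/-- `lastextent(p) = {v : p ∈ last(v)}`. -/
def lastExtent (R : RE α) (p : TreePath) : Set TreePath := {v | p ∈ R.lastSet v}

/-- `firstextent(P)` for a set of positions `P`. -/
def firstExtentSet (R : RE α) (P : Set TreePath) : Set TreePath := ⋃ p ∈ P, R.firstExtent p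

/-- `lastextent(P)` for a set of positions `P`. -/
def lastExtentSet (R : RE α) (P : Set TreePath) : Set TreePath := ⋃ p ∈ P, R.lastExtent p

end RE

/-- Lowest common ancestor of two nodes = longest common prefix of the paths. -/
def lcaP : TreePath → TreePath → TreePath
  | a :: p, b :: q => if a = b then a :: lcaP p q else []
  | _, _ => []

namespace RE

variable {α : Type}

/-- `u = parent*(v)`: `u` is the lowest ancestor of `v` (possibly `v` itself)
that is a `∗`-node. -/
def IsLowestStarAnc (R : RE α) (v u : TreePath) : Prop :=
  u <+: v ∧ R.IsStarNode u ∧ ∀ w, w <+: v → R.IsStarNode w → w <+: u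

/-- `δ(p,α)`: the `α`-transitions of the position automaton out of position `p`. -/
def delta (R : RE α) (p : TreePath) (a : α) : Set TreePath :=
  {q | R.labelOf q = some a ∧ q ∈ R.followSet p}

/-- `δ(P,α) = ∪_{p ∈ P} δ(p,α)`. -/
def deltaSet (R : RE α) (P : Set TreePath) (a : α) : Set TreePath := ⋃ p ∈ P, R.delta p a

/-- Internal `⊙`-transition: `δ⊙(v,α) = {q ∈ Pos_α : right(v) ∈ firstextent(q)}`. -/
def deltaOdot (R : RE α) (v : TreePath) (a : α) : Set TreePath :=
  {q | R.labelOf q = some a ∧ q ∈ R.firstSet (v ++ [Dir.R])}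

/-- Internal `∗`-transition: `δ∗(v,α) = {q ∈ Pos_α : parent*(v) ∈ firstextent(q)}`. -/
def deltaStar (R : RE α) (v : TreePath) (a : α) : Set TreePath :=
  {q | R.labelOf q = some a ∧ ∃ u, R.IsLowestStarAnc v u ∧ q ∈ R.firstSet u}

/-- `N⊙(P,α)`: the `⊙`-transition nodes. -/
def NOdot (R : RE α) (P : Set TreePath) (a : α) : Set TreePath :=
  {v | R.IsCatNode v ∧ (v ++ [Dir.L]) ∈ R.lastExtentSet P ∧
    (∃ q, R.labelOf q = some a ∧ q ∈ R.firstSet (v ++ [Dir.R]))}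

/-- `N∗(P,α)`: the `∗`-transition nodes. -/
def NStar (R : RE α) (P : Set TreePath) (a : α) : Set TreePath :=
  {u | R.IsStarNode u ∧
    (∃ p ∈ P, ∃ q, R.labelOf q = some a ∧ R.IsLowestStarAnc (lcaP p q) u) ∧
    (∃ p ∈ P, p ∈ R.lastSet u) ∧ (∃ q, R.labelOf q = some a ∧ q ∈ R.firstSet u)}

/-- `u` `∗`-dominates `v`: `u` is a proper ancestor of `v` and `first(v) ⊆ first(u)`. -/
def StarDom (R : RE α) (u v : TreePath) : Prop :=
  u <+: v ∧ u ≠ v ∧ R.firstSet v ⊆ R.firstSet u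

/-- `u` `⊙`-dominates `v`: `u` is a proper ancestor of `v` and
`first(right(v)) ⊆ first(right(u))`. -/
def OdotDom (R : RE α) (u v : TreePath) : Prop :=
  u <+: v ∧ u ≠ v ∧ R.firstSet (v ++ [Dir.R]) ⊆ R.firstSet (u ++ [Dir.R])

/-- `Ñ⊙(P,α)`: the relevant `⊙`-transition nodes. -/
def RelNOdot (R : RE α) (P : Set TreePath) (a : α) : Set TreePath :=
  {v ∈ R.NOdot P a | ∀ u ∈ R.NOdot P a, ¬ R.OdotDom u v}

/-- `Ñ∗(P,α)`: the relevant `∗`-transition nodes. -/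
def RelNStar (R : RE α) (P : Set TreePath) (a : α) : Set TreePath :=
  {v ∈ R.NStar P a | ∀ u ∈ R.NStar P a, ¬ R.StarDom u v}

/-- `v` is a node of the transition tree `T` of `P`: an ancestor of some position of `P`. -/
def InT (R : RE α) (P : Set TreePath) (v : TreePath) : Prop := ∃ p ∈ P, v <+: p

/-- `v` is a branching node of the transition tree of `P`: both children are in `T`. -/
def Branching (R : RE α) (P : Set TreePath) (v : TreePath) : Prop :=
  R.InT P (v ++ [Dir.L]) ∧ R.InT P (v ++ [Dir.R])

/-- `v` is a leaf of the transition tree of `P`. -/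
def LeafT (R : RE α) (P : Set TreePath) (v : TreePath) : Prop :=
  R.InT P v ∧ ∀ d : Dir, ¬ R.InT P (v ++ [d])

/-- `v` is a `⊙`-live node: a `⊙`-node with `left(v) ∈ lastextent(P)`. -/
def OdotLive (R : RE α) (P : Set TreePath) (v : TreePath) : Prop :=
  R.IsCatNode v ∧ (v ++ [Dir.L]) ∈ R.lastExtentSet P

/-- `v` is weakly `⊙`-dominated by `u`: `u` is `⊙`-live, a proper ancestor of `v`,
and `first(v) ⊆ first(right(u))`. -/
def WeakOdotDom (R : RE α) (P : Set TreePath) (u v : TreePath) : Prop :=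
  R.OdotLive P u ∧ u <+: v ∧ u ≠ v ∧ R.firstSet v ⊆ R.firstSet (u ++ [Dir.R])

/-- The pair `(t, b)` delimits a segment of the transition tree of `P`: a path from a
leaf or branching node `b` up to the nearest branching node `t` strictly above it
(or to the root if there is none). -/
def IsSegment (R : RE α) (P : Set TreePath) (t b : TreePath) : Prop :=
  R.InT P b ∧ t <+: b ∧ t ≠ b ∧
  (R.LeafT P b ∨ R.Branching P b) ∧
  (R.Branching P t ∨ t = []) ∧
  (∀ w, t <+: w → w <+: b → w ≠ t → w ≠ b → ¬ R.Branching P w)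

/-- The language `L(R)`. -/
def lang : RE α → Set (List α)
  | .eps => {[]}
  | .ch a => {[a]}
  | .cat r s => {w | ∃ u ∈ lang r, ∃ v ∈ lang s, w = u ++ v}
  | .alt r s => lang r ∪ lang s
  | .star r => {w | ∃ l : List (List α), (∀ u ∈ l, u ∈ lang r) ∧ w = l.flatten}

/-- The position automaton (Glushkov automaton) of `R`: states are the positions of `R`
plus a start state `none`; for `q ∈ first(R)` there is a transition `(p₀, q, label(q))`,
and for `q ∈ follow(R,p)` a transition `(p, q, label(q))`; accepting states are
`last(R)`, together with `p₀` if `ε ∈ L(R)`. -/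
def posNFA (R : RE α) : NFA α (Option TreePath) where
  step := fun s a =>
    {t | ∃ q : TreePath, t = some q ∧ R.labelOf q = some a ∧
      ((s = none ∧ q ∈ R.firstSet []) ∨ (∃ p, s = some p ∧ q ∈ R.followSet p))}
  start := {none}
  accept := {t | (∃ p, t = some p ∧ p ∈ R.lastSet []) ∨ (t = none ∧ [] ∈ R.lang)}

end RE

section ListLemmas
variable {β γ : Type*}

lemma map_concat_inv {f : β → γ} {l : List β} {x : List γ} {p : γ}
    (h : l.map f = x ++ [p]) : ∃ l₁ p', l = l₁ ++ [p'] ∧ l₁.map f = x ∧ f p' = p := by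
  rcases List.eq_nil_or_concat l with rfl | ⟨l₁, p', rfl⟩
  · simp at h
  · rw [List.concat_eq_append, List.map_append, List.map_singleton] at h
    obtain ⟨h1, h2⟩ := List.append_inj' h (by simp)
    exact ⟨l₁, p', by simp, h1, by simpa using h2⟩

lemma map_adj_inv {f : β → γ} : ∀ {l : List β} {x : List γ} {p q : γ} {y : List γ},
    l.map f = x ++ p :: q :: y →
    ∃ x' p' q' y', l = x' ++ p' :: q' :: y' ∧ f p' = p ∧ f q' = q := by
  intro l
  induction l with
  | nil => intro x p q y h; simp at h
  | cons a l ih =>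
    intro x p q y h
    cases x with
    | nil =>
      simp only [List.map_cons, List.nil_append, List.cons.injEq] at h
      obtain ⟨hp, h⟩ := h
      cases l with
      | nil => simp at h
      | cons b l' =>
        simp only [List.map_cons, List.cons.injEq] at h
        exact ⟨[], a, b, l', rfl, hp, h.1⟩
    | cons c x' =>
      simp only [List.map_cons, List.cons_append, List.cons.injEq] at h
      obtain ⟨-, h⟩ := h
      obtain ⟨x'', p', q', y', rfl, hp, hq⟩ := ih h
      exact ⟨a :: x'', p', q', y', rfl, hp, hq⟩

lemma split3 : ∀ (a b w₁ : List β) (p q : β) (w₂ : List β), a ++ b = w₁ ++ p :: q :: w₂ →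
    (∃ x y, a = x ++ p :: q :: y) ∨ ((∃ x, a = x ++ [p]) ∧ ∃ y, b = q :: y) ∨
    (∃ x y, b = x ++ p :: q :: y) := by
  intro a
  induction a with
  | nil => intro b w₁ p q w₂ h; exact .inr (.inr ⟨w₁, w₂, by simpa using h⟩)
  | cons hd a ih =>
    intro b w₁ p q w₂ h
    cases w₁ with
    | nil =>
      simp only [List.nil_append, List.cons_append, List.cons.injEq] at h
      obtain ⟨rfl, h⟩ := h
      cases a with
      | nil => exact .inr (.inl ⟨⟨[], rfl⟩, w₂, by simpa using h⟩)
      | cons b' a' =>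
        simp only [List.cons_append, List.cons.injEq] at h
        exact .inl ⟨[], a', by simp [h.1]⟩
    | cons c w₁' =>
      simp only [List.cons_append, List.cons.injEq] at h
      rcases ih b w₁' p q w₂ h.2 with ⟨x, y, rfl⟩ | ⟨⟨x, rfl⟩, hy⟩ | h'
      · exact .inl ⟨hd :: x, y, rfl⟩
      · exact .inr (.inl ⟨⟨hd :: x, rfl⟩, hy⟩)
      · exact .inr (.inr h')

end ListLemmas
section RELemmas
open RE
variable {α : Type}

lemma star_first_aux {e : RE α} {w : List TreePath} (h : RE.PosSeq e w) :
    ∀ {r : RE α}, e = RE.star r → ∀ {q : TreePath} {y : List TreePath}, w = q :: y →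
      ∃ q' y', q = Dir.L :: q' ∧ RE.PosSeq r (q' :: y') := by
  induction h with
  | eps => intro r he; cases he
  | ch a => intro r he; cases he
  | cat _ _ _ _ => intro r he; cases he
  | altL _ _ => intro r he; cases he
  | altR _ _ => intro r he; cases he
  | starNil => intro r he q y hw; cases hw
  | @starCons r0 u w' hu hw ihu ihw =>
    intro r he q y heq
    cases he
    cases u with
    | nil => exact ihw rfl (by simpa using heq)
    | cons q0 u' =>
      simp only [List.map_cons, List.cons_append, List.cons.injEq] at heq
      exact ⟨q0, u', heq.1.symm, by exact hu⟩

lemma star_first {r : RE α} {q : TreePath} {y : List TreePath}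
    (h : RE.PosSeq (RE.star r) (q :: y)) :
    ∃ q' y', q = Dir.L :: q' ∧ RE.PosSeq r (q' :: y') :=
  star_first_aux h rfl rfl

lemma star_last_aux {e : RE α} {w : List TreePath} (h : RE.PosSeq e w) :
    ∀ {r : RE α}, e = RE.star r → ∀ {x : List TreePath} {p : TreePath}, w = x ++ [p] →
      ∃ p' x', p = Dir.L :: p' ∧ RE.PosSeq r (x' ++ [p']) := by
  induction h with
  | eps => intro r he; cases he
  | ch a => intro r he; cases he
  | cat _ _ _ _ => intro r he; cases he
  | altL _ _ => intro r he; cases he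
  | altR _ _ => intro r he; cases he
  | starNil => intro r he x p hw; simp at hw
  | @starCons r0 u w' hu hw ihu ihw =>
    intro r he x p heq
    cases he
    rcases List.eq_nil_or_concat w' with rfl | ⟨w₁, p₂, rfl⟩
    · rw [List.append_nil] at heq
      obtain ⟨l₁, p', rfl, hmap, hfp⟩ := map_concat_inv heq
      exact ⟨p', l₁, hfp.symm, by exact hu⟩
    · rw [List.concat_eq_append] at heq hw ihw
      have heq2 : (u.map (Dir.L :: ·) ++ w₁) ++ [p₂] = x ++ [p] := by
        simpa [List.append_assoc] using heq
      obtain ⟨-, h2⟩ := List.append_inj' heq2 rfl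
      obtain ⟨p', x', hp, hs⟩ := ihw rfl rfl
      exact ⟨p', x', by rw [← List.singleton_inj.mp h2]; exact hp, hs⟩

lemma star_append_aux {e : RE α} {w : List TreePath} (h : RE.PosSeq e w) :
    ∀ {r : RE α}, e = RE.star r → ∀ {b : List TreePath}, RE.PosSeq (RE.star r) b →
      RE.PosSeq (RE.star r) (w ++ b) := by
  induction h with
  | eps => intro r he; cases he
  | ch a => intro r he; cases he
  | cat _ _ _ _ => intro r he; cases he
  | altL _ _ => intro r he; cases he
  | altR _ _ => intro r he; cases he
  | starNil => intro r he b hb; cases he; simpa using hb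
  | @starCons r0 u w' hu hw ihu ihw =>
    intro r he b hb
    cases he
    rw [List.append_assoc]
    exact RE.PosSeq.starCons hu (ihw rfl hb)

lemma star_append {r : RE α} {a b : List TreePath} (ha : RE.PosSeq (RE.star r) a)
    (hb : RE.PosSeq (RE.star r) b) : RE.PosSeq (RE.star r) (a ++ b) :=
  star_append_aux ha rfl hb

lemma exists_posSeq (r : RE α) : ∃ w, RE.PosSeq r w := by
  induction r with
  | eps => exact ⟨[], .eps⟩
  | ch a => exact ⟨[[]], .ch a⟩
  | cat r s ihr ihs =>
    obtain ⟨u, hu⟩ := ihr; obtain ⟨v, hv⟩ := ihs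
    exact ⟨_, .cat hu hv⟩
  | alt r s ihr ihs => obtain ⟨u, hu⟩ := ihr; exact ⟨_, .altL hu⟩
  | star r ihr => exact ⟨[], .starNil⟩

end RELemmas
section CoreLemmas
variable {α : Type}

@[simp] lemma sub_nil (r : RE α) : r.sub [] = some r := by cases r <;> rfl
@[simp] lemma sub_catL (r s : RE α) (x : TreePath) : (RE.cat r s).sub (Dir.L :: x) = r.sub x := rfl
@[simp] lemma sub_catR (r s : RE α) (x : TreePath) : (RE.cat r s).sub (Dir.R :: x) = s.sub x := rfl
@[simp] lemma sub_altL (r s : RE α) (x : TreePath) : (RE.alt r s).sub (Dir.L :: x) = r.sub x := rfl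
@[simp] lemma sub_altR (r s : RE α) (x : TreePath) : (RE.alt r s).sub (Dir.R :: x) = s.sub x := rfl
@[simp] lemma sub_starL (r : RE α) (x : TreePath) : (RE.star r).sub (Dir.L :: x) = r.sub x := rfl
@[simp] lemma sub_starR (r : RE α) (x : TreePath) : (RE.star r).sub (Dir.R :: x) = none := rfl
@[simp] lemma sub_eps (d : Dir) (x : TreePath) : (RE.eps : RE α).sub (d :: x) = none := by
  cases d <;> rfl
@[simp] lemma sub_ch (a : α) (d : Dir) (x : TreePath) : (RE.ch a).sub (d :: x) = none := by
  cases d <;> rfl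

lemma sub_append : ∀ (v : TreePath) (R : RE α) (w : TreePath),
    R.sub (v ++ w) = (R.sub v).bind (fun c => c.sub w) := by
  intro v
  induction v with
  | nil => intro R w; simp
  | cons d v ih => intro R w; cases R <;> cases d <;> simp [ih]

lemma posSeq_context : ∀ (v : TreePath) {R r : RE α}, R.sub v = some r → ∀ {w : List TreePath},
    RE.PosSeq r w → ∃ w₁ w₂, RE.PosSeq R (w₁ ++ w.map (v ++ ·) ++ w₂) := by
  intro v
  induction v with
  | nil =>
    intro R r h w hw
    rw [sub_nil, Option.some_inj] at h
    subst h
    exact ⟨[], [], by simpa using hw⟩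
  | cons d v ih =>
    intro R r h w hw
    cases R with
    | eps => simp at h
    | ch a => simp at h
    | cat r₁ r₂ =>
      cases d with
      | L =>
        rw [sub_catL] at h
        obtain ⟨w₁, w₂, hs⟩ := ih h hw
        obtain ⟨z, hz⟩ := exists_posSeq r₂
        refine ⟨w₁.map (Dir.L :: ·), (w₂.map (Dir.L :: ·)) ++ z.map (Dir.R :: ·), ?_⟩
        have := RE.PosSeq.cat hs hz
        simpa [List.map_map, List.map_append, List.append_assoc, Function.comp_def] using this
      | R =>
        rw [sub_catR] at h
        obtain ⟨w₁, w₂, hs⟩ := ih h hw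
        obtain ⟨z, hz⟩ := exists_posSeq r₁
        refine ⟨z.map (Dir.L :: ·) ++ w₁.map (Dir.R :: ·), w₂.map (Dir.R :: ·), ?_⟩
        have := RE.PosSeq.cat hz hs
        simpa [List.map_map, List.map_append, List.append_assoc, Function.comp_def] using this
    | alt r₁ r₂ =>
      cases d with
      | L =>
        rw [sub_altL] at h
        obtain ⟨w₁, w₂, hs⟩ := ih h hw
        refine ⟨w₁.map (Dir.L :: ·), w₂.map (Dir.L :: ·), ?_⟩
        have := RE.PosSeq.altL (s := r₂) hs
        simpa [List.map_map, List.map_append, List.append_assoc, Function.comp_def] using this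
      | R =>
        rw [sub_altR] at h
        obtain ⟨w₁, w₂, hs⟩ := ih h hw
        refine ⟨w₁.map (Dir.R :: ·), w₂.map (Dir.R :: ·), ?_⟩
        have := RE.PosSeq.altR (r := r₁) hs
        simpa [List.map_map, List.map_append, List.append_assoc, Function.comp_def] using this
    | star r₁ =>
      cases d with
      | R => simp at h
      | L =>
        rw [sub_starL] at h
        obtain ⟨w₁, w₂, hs⟩ := ih h hw
        refine ⟨w₁.map (Dir.L :: ·), w₂.map (Dir.L :: ·), ?_⟩
        have := RE.PosSeq.starCons hs RE.PosSeq.starNil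
        simpa [List.map_map, List.map_append, List.append_assoc, Function.comp_def] using this

lemma lcaP_cons (d : Dir) (p q : TreePath) : lcaP (d :: p) (d :: q) = d :: lcaP p q := by
  simp [lcaP]

lemma lcaP_ne (d d' : Dir) (hne : d ≠ d') (p q : TreePath) : lcaP (d :: p) (d' :: q) = [] := by
  simp [lcaP, hne]

/-- The conclusion of the follow-characterization lemma. -/
def Concl (r : RE α) (p q : TreePath) : Prop :=
  (∃ v, r.IsCatNode v ∧ p ∈ r.lastSet (v ++ [Dir.L]) ∧ q ∈ r.firstSet (v ++ [Dir.R])) ∨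
  (∃ u, r.IsStarNode u ∧ r.IsLowestStarAnc (lcaP p q) u ∧ p ∈ r.lastSet u ∧ q ∈ r.firstSet u)

/-- `lca(p,q)` has no star ancestor in `r`. -/
def NoStarAnc (r : RE α) (p q : TreePath) : Prop := ∀ w, w <+: lcaP p q → ¬ r.IsStarNode w

section Lift
variable {R c : RE α} {d : Dir}

lemma lastSet_lift (hsub : ∀ x, R.sub (d :: x) = c.sub x) {p v : TreePath} (h : p ∈ c.lastSet v) : (d :: p) ∈ R.lastSet (d :: v) := by
  obtain ⟨t, ht, w, p', hs, hp⟩ := h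
  exact ⟨t, by rw [hsub]; exact ht, w, p', hs, by simp [hp]⟩

lemma firstSet_lift (hsub : ∀ x, R.sub (d :: x) = c.sub x) {p v : TreePath} (h : p ∈ c.firstSet v) : (d :: p) ∈ R.firstSet (d :: v) := by
  obtain ⟨t, ht, p', w, hs, hp⟩ := h
  exact ⟨t, by rw [hsub]; exact ht, p', w, hs, by simp [hp]⟩

lemma isStar_lift (hsub : ∀ x, R.sub (d :: x) = c.sub x) {v : TreePath} (h : c.IsStarNode v) : R.IsStarNode (d :: v) := by
  obtain ⟨t, ht⟩ := h
  exact ⟨t, by rw [hsub]; exact ht⟩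

lemma isStar_unlift (hsub : ∀ x, R.sub (d :: x) = c.sub x) {v : TreePath} (h : R.IsStarNode (d :: v)) : c.IsStarNode v := by
  obtain ⟨t, ht⟩ := h
  exact ⟨t, by rw [hsub] at ht; exact ht⟩

lemma isCat_lift (hsub : ∀ x, R.sub (d :: x) = c.sub x) {v : TreePath} (h : c.IsCatNode v) : R.IsCatNode (d :: v) := by
  obtain ⟨t₁, t₂, ht⟩ := h
  exact ⟨t₁, t₂, by rw [hsub]; exact ht⟩

lemma Concl.lift (hsub : ∀ x, R.sub (d :: x) = c.sub x) {p q : TreePath} (h : Concl c p q) : Concl R (d :: p) (d :: q) := by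
  rcases h with ⟨v, hcat, hl, hf⟩ | ⟨u, hstar, ⟨hpre, hstaru, hmin⟩, hl, hf⟩
  · exact .inl ⟨d :: v, isCat_lift hsub hcat, lastSet_lift hsub hl, firstSet_lift hsub hf⟩
  · refine .inr ⟨d :: u, isStar_lift hsub hstar, ?_, lastSet_lift hsub hl, firstSet_lift hsub hf⟩
    rw [lcaP_cons]
    refine ⟨List.cons_prefix_cons.mpr ⟨rfl, hpre⟩, isStar_lift hsub hstaru, ?_⟩
    intro w hw hws
    cases w with
    | nil => exact List.nil_prefix
    | cons d' w' =>
      obtain ⟨rfl, hw'⟩ := List.cons_prefix_cons.mp hw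
      exact List.cons_prefix_cons.mpr ⟨rfl, hmin w' hw' (isStar_unlift hsub hws)⟩

lemma noStar_lift (hsub : ∀ x, R.sub (d :: x) = c.sub x) (hroot : ¬ R.IsStarNode []) {p q : TreePath} (h : NoStarAnc c p q) :
    NoStarAnc R (d :: p) (d :: q) := by
  intro w hw hws
  rw [lcaP_cons] at hw
  cases w with
  | nil => exact hroot hws
  | cons d' w' =>
    obtain ⟨rfl, hw'⟩ := List.cons_prefix_cons.mp hw
    exact h w' hw' (isStar_unlift hsub hws)

end Lift

lemma notStar_nil {r : RE α} (h : ∀ t, r ≠ RE.star t) : ¬ r.IsStarNode [] := by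
  rintro ⟨t, ht⟩
  rw [sub_nil, Option.some_inj] at ht
  exact h t ht

lemma concl_star_root {r : RE α} {p' q' : TreePath} {x y : List TreePath}
    (h1 : RE.PosSeq (RE.star r) (x ++ [Dir.L :: p']))
    (h2 : RE.PosSeq (RE.star r) ((Dir.L :: q') :: y))
    (hns : NoStarAnc r p' q') : Concl (RE.star r) (Dir.L :: p') (Dir.L :: q') := by
  refine .inr ⟨[], ⟨r, rfl⟩, ⟨List.nil_prefix, ⟨r, rfl⟩, ?_⟩, ?_, ?_⟩
  · intro w hw hws
    cases w with
    | nil => exact List.prefix_refl _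
    | cons d w' =>
      rw [lcaP_cons] at hw
      obtain ⟨rfl, hw'⟩ := List.cons_prefix_cons.mp hw
      exact absurd (isStar_unlift (fun x => sub_starL r x) hws) (hns w' hw')
  · exact ⟨RE.star r, rfl, x, Dir.L :: p', h1, by simp⟩
  · exact ⟨RE.star r, rfl, Dir.L :: q', y, h2, by simp⟩

lemma posSeq_cat_inv {r s : RE α} {l : List TreePath} (h : RE.PosSeq (RE.cat r s) l) :
    ∃ u v, RE.PosSeq r u ∧ RE.PosSeq s v ∧ l = u.map (Dir.L :: ·) ++ v.map (Dir.R :: ·) := by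
  cases h
  exact ⟨_, _, ‹_›, ‹_›, rfl⟩

lemma posSeq_alt_inv {r s : RE α} {l : List TreePath} (h : RE.PosSeq (RE.alt r s) l) :
    (∃ u, RE.PosSeq r u ∧ l = u.map (Dir.L :: ·)) ∨
    (∃ v, RE.PosSeq s v ∧ l = v.map (Dir.R :: ·)) := by
  cases h
  · exact .inl ⟨_, ‹_›, rfl⟩
  · exact .inr ⟨_, ‹_›, rfl⟩

end CoreLemmas
section LemB
variable {α : Type}

lemma star_last {r : RE α} {x : List TreePath} {p : TreePath}
    (h : RE.PosSeq (RE.star r) (x ++ [p])) :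
    ∃ p' x', p = Dir.L :: p' ∧ RE.PosSeq r (x' ++ [p']) :=
  star_last_aux h rfl rfl

lemma posSeq_eps_inv {l : List TreePath} (h : RE.PosSeq (RE.eps : RE α) l) : l = [] := by
  cases h; rfl

lemma posSeq_ch_inv {a : α} {l : List TreePath} (h : RE.PosSeq (RE.ch a) l) : l = [[]] := by
  cases h; rfl

lemma last_of_map_concat {d : Dir} {l : List TreePath} {x : List TreePath} {p : TreePath}
    (h : l.map (d :: ·) = x ++ [p]) : ∃ l₁ p', l = l₁ ++ [p'] ∧ p = d :: p' := by
  obtain ⟨l₁, p', rfl, -, hp⟩ := map_concat_inv h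
  exact ⟨l₁, p', rfl, hp.symm⟩

lemma head_of_map_cons {d : Dir} {l : List TreePath} {q : TreePath} {y : List TreePath}
    (h : l.map (d :: ·) = q :: y) : ∃ q' l', l = q' :: l' ∧ q = d :: q' := by
  cases l with
  | nil => simp at h
  | cons q' l' =>
    rw [List.map_cons, List.cons.injEq] at h
    exact ⟨q', l', rfl, h.1.symm⟩

lemma lemB : ∀ (r : RE α) {x p q y}, RE.PosSeq r (x ++ [p]) → RE.PosSeq r (q :: y) →
    Concl r p q ∨ NoStarAnc r p q := by
  intro r
  induction r with
  | eps => intro x p q y h1 h2; exact absurd (posSeq_eps_inv h2) (by simp)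
  | ch a =>
    intro x p q y h1 h2
    have hp : p = [] := by
      have := posSeq_ch_inv h1
      rcases x with - | ⟨b, x'⟩
      · simpa using this.symm
      · rw [List.cons_append, List.cons.injEq] at this
        exact absurd this.2 (by simp)
    have hq : q = [] := by
      have := posSeq_ch_inv h2
      rw [List.cons.injEq] at this
      exact this.1
    subst hp hq
    right
    intro w hw hws
    rw [show lcaP ([] : TreePath) [] = [] from rfl, List.prefix_nil] at hw
    subst hw
    exact notStar_nil (by intro t h; cases h) hws
  | cat r s ihr ihs =>
    intro x p q y h1 h2
    obtain ⟨u, v, hu, hv, hl1⟩ := posSeq_cat_inv h1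
    obtain ⟨u', v', hu', hv', hl2⟩ := posSeq_cat_inv h2
    -- analyze p
    rcases List.eq_nil_or_concat v with rfl | ⟨v₁, p₁, rfl⟩
    · -- p in left child
      rw [List.map_nil, List.append_nil] at hl1
      obtain ⟨u₁, p', rfl, hp⟩ := last_of_map_concat hl1.symm
      subst hp
      -- analyze q
      cases u' with
      | nil =>
        rw [List.map_nil, List.nil_append] at hl2
        obtain ⟨q₁, v'', rfl, hq⟩ := head_of_map_cons hl2.symm
        subst hq
        -- p left, q right : junction ⊙-node at the root
        exact .inl (.inl ⟨[], ⟨r, s, rfl⟩, ⟨r, by simp, u₁, p', hu, by simp⟩, ⟨s, by simp, q₁, v'', hv', by simp⟩⟩)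
      | cons q₁ u'' =>
        rw [List.map_cons, List.cons_append, List.cons.injEq] at hl2
        obtain ⟨hq, -⟩ := hl2
        subst hq
        rcases ihr hu hu' with hC | hns
        · exact .inl (hC.lift (fun x => sub_catL r s x))
        · exact .inr (noStar_lift (fun x => sub_catL r s x)
            (notStar_nil (by intro t h; cases h)) hns)
    · -- p in right child
      rw [List.concat_eq_append] at hv hl1
      have hp : p = Dir.R :: p₁ := by
        have h' : (u.map (Dir.L :: ·) ++ v₁.map (Dir.R :: ·)) ++ [Dir.R :: p₁] = x ++ [p] := by
          simpa [List.append_assoc] using hl1.symm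
        exact (List.singleton_inj.mp (List.append_inj' h' rfl).2).symm
      subst hp
      cases u' with
      | nil =>
        rw [List.map_nil, List.nil_append] at hl2
        obtain ⟨q₁, v'', rfl, hq⟩ := head_of_map_cons hl2.symm
        subst hq
        rcases ihs hv hv' with hC | hns
        · exact .inl (hC.lift (fun x => sub_catR r s x))
        · exact .inr (noStar_lift (fun x => sub_catR r s x)
            (notStar_nil (by intro t h; cases h)) hns)
      | cons q₁ u'' =>
        rw [List.map_cons, List.cons_append, List.cons.injEq] at hl2
        obtain ⟨hq, -⟩ := hl2
        subst hq
        -- p right, q left : no star ancestor of lca = []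
        right
        intro w hw hws
        rw [lcaP_ne Dir.R Dir.L (by simp) p₁ q₁, List.prefix_nil] at hw
        subst hw
        exact notStar_nil (by intro t h; cases h) hws
  | alt r s ihr ihs =>
    intro x p q y h1 h2
    rcases posSeq_alt_inv h1 with ⟨u, hu, hl1⟩ | ⟨v, hv, hl1⟩ <;>
      rcases posSeq_alt_inv h2 with ⟨u', hu', hl2⟩ | ⟨v', hv', hl2⟩
    · obtain ⟨u₁, p', rfl, hp⟩ := last_of_map_concat hl1.symm
      obtain ⟨q₁, u'', rfl, hq⟩ := head_of_map_cons hl2.symm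
      subst hp; subst hq
      rcases ihr hu hu' with hC | hns
      · exact .inl (hC.lift (fun x => sub_altL r s x))
      · exact .inr (noStar_lift (fun x => sub_altL r s x)
          (notStar_nil (by intro t h; cases h)) hns)
    · obtain ⟨u₁, p', rfl, hp⟩ := last_of_map_concat hl1.symm
      obtain ⟨q₁, v'', rfl, hq⟩ := head_of_map_cons hl2.symm
      subst hp; subst hq
      right
      intro w hw hws
      rw [lcaP_ne Dir.L Dir.R (by simp) p' q₁, List.prefix_nil] at hw
      subst hw
      exact notStar_nil (by intro t h; cases h) hws
    · obtain ⟨u₁, p', rfl, hp⟩ := last_of_map_concat hl1.symm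
      obtain ⟨q₁, u'', rfl, hq⟩ := head_of_map_cons hl2.symm
      subst hp; subst hq
      right
      intro w hw hws
      rw [lcaP_ne Dir.R Dir.L (by simp) p' q₁, List.prefix_nil] at hw
      subst hw
      exact notStar_nil (by intro t h; cases h) hws
    · obtain ⟨u₁, p', rfl, hp⟩ := last_of_map_concat hl1.symm
      obtain ⟨q₁, v'', rfl, hq⟩ := head_of_map_cons hl2.symm
      subst hp; subst hq
      rcases ihs hv hv' with hC | hns
      · exact .inl (hC.lift (fun x => sub_altR r s x))
      · exact .inr (noStar_lift (fun x => sub_altR r s x)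
          (notStar_nil (by intro t h; cases h)) hns)
  | star r ihr =>
    intro x p q y h1 h2
    obtain ⟨p', x', hp, hs1⟩ := star_last h1
    obtain ⟨q', y', hq, hs2⟩ := star_first h2
    subst hp; subst hq
    rcases ihr hs1 hs2 with hC | hns
    · exact .inl (hC.lift (fun x => sub_starL r x))
    · exact .inl (concl_star_root h1 h2 hns)

end LemB
section LemA
variable {α : Type}

lemma lemA {e : RE α} {w : List TreePath} (h : RE.PosSeq e w) :
    ∀ {w₁ w₂ : List TreePath} {p q : TreePath}, w = w₁ ++ p :: q :: w₂ → Concl e p q := by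
  induction h with
  | eps => intro w₁ w₂ p q h; exact absurd h (by simp)
  | ch a =>
    intro w₁ w₂ p q h
    rcases w₁ with - | ⟨b, w₁⟩
    · rw [List.nil_append, List.cons.injEq] at h
      exact absurd h.2 (by simp)
    · rw [List.cons_append, List.cons.injEq] at h
      rcases w₁ with - | ⟨c, w₁⟩ <;> simp at h
  | @cat r s u v hu hv ihu ihv =>
    intro w₁ w₂ p q heq
    rcases split3 _ _ _ _ _ _ heq with ⟨x, y, hx⟩ | ⟨⟨x, hx⟩, ⟨y, hy⟩⟩ | ⟨x, y, hx⟩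
    · obtain ⟨x', p', q', y', rfl, hp, hq⟩ := map_adj_inv hx
      rw [← hp, ← hq]
      exact (ihu rfl).lift (fun z => sub_catL r s z)
    · obtain ⟨u₁, p', rfl, hp⟩ := last_of_map_concat hx
      obtain ⟨q₁, v'', rfl, hq⟩ := head_of_map_cons hy
      rw [hp, hq]
      exact .inl ⟨[], ⟨r, s, rfl⟩, ⟨r, by simp, u₁, p', hu, by simp⟩,
        ⟨s, by simp, q₁, v'', hv, by simp⟩⟩
    · obtain ⟨x', p', q', y', rfl, hp, hq⟩ := map_adj_inv hx
      rw [← hp, ← hq]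
      exact (ihv rfl).lift (fun z => sub_catR r s z)
  | @altL r s u hu ihu =>
    intro w₁ w₂ p q heq
    obtain ⟨x', p', q', y', rfl, hp, hq⟩ := map_adj_inv heq
    rw [← hp, ← hq]
    exact (ihu rfl).lift (fun z => sub_altL r s z)
  | @altR r s v hv ihv =>
    intro w₁ w₂ p q heq
    obtain ⟨x', p', q', y', rfl, hp, hq⟩ := map_adj_inv heq
    rw [← hp, ← hq]
    exact (ihv rfl).lift (fun z => sub_altR r s z)
  | starNil => intro w₁ w₂ p q h; exact absurd h (by simp)
  | @starCons r u w' hu hw ihu ihw =>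
    intro w₁ w₂ p q heq
    rcases split3 _ _ _ _ _ _ heq with ⟨x, y, hx⟩ | ⟨⟨x, hx⟩, ⟨y, hy⟩⟩ | ⟨x, y, hx⟩
    · obtain ⟨x', p', q', y', rfl, hp, hq⟩ := map_adj_inv hx
      rw [← hp, ← hq]
      exact (ihu rfl).lift (fun z => sub_starL r z)
    · obtain ⟨u₁, p', rfl, hp⟩ := last_of_map_concat hx
      obtain ⟨q', y', hq, hs2⟩ := star_first (hy ▸ hw)
      have hseq : RE.PosSeq (RE.star r) (x ++ [p]) := by
        rw [← hx]
        simpa using RE.PosSeq.starCons hu RE.PosSeq.starNil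
      rw [hp] at hseq
      have hseq2 : RE.PosSeq (RE.star r) ((Dir.L :: q') :: y) := by
        rw [← hq]; exact hy ▸ hw
      rcases lemB r hu hs2 with hC | hns
      · rw [hp, hq]
        exact hC.lift (fun z => sub_starL r z)
      · rw [hp, hq]
        exact concl_star_root hseq hseq2 hns
    · exact ihw hx
end LemA
/-- For any set of positions `P` of `R` and any character `α`, `δ(P,α)` is the union
over `v ∈ N⊙(P,α)` of `δ⊙(v,α)` together with the union over `u ∈ N∗(P,α)` of
`δ∗(u,α)`. -/
theorem deltaSet_eq_union_transition_nodes {α : Type} (R : RE α) (P : Set TreePath)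
    (a : α) (hP : ∀ p ∈ P, R.IsPos p) :
    R.deltaSet P a =
      (⋃ v ∈ R.NOdot P a, R.deltaOdot v a) ∪ (⋃ u ∈ R.NStar P a, R.deltaStar u a) := by
  ext q
  constructor
  · intro hq
    simp only [RE.deltaSet, Set.mem_iUnion] at hq
    obtain ⟨p, hpP, hq⟩ := hq
    obtain ⟨hlab, w₁, w₂, hseq⟩ := hq
    rcases lemA hseq rfl with ⟨v, hcat, hl, hf⟩ | ⟨u, hstar, hanc, hl, hf⟩
    · exact Set.mem_union_left _ (Set.mem_biUnion
        (show v ∈ R.NOdot P a from ⟨hcat, Set.mem_biUnion hpP hl, ⟨q, hlab, hf⟩⟩)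
        (show q ∈ R.deltaOdot v a from ⟨hlab, hf⟩))
    · exact Set.mem_union_right _ (Set.mem_biUnion
        (show u ∈ R.NStar P a from ⟨hstar, ⟨p, hpP, q, hlab, hanc⟩, ⟨p, hpP, hl⟩, ⟨q, hlab, hf⟩⟩)
        (show q ∈ R.deltaStar u a from ⟨hlab, u, ⟨List.prefix_refl _, hstar, fun w hw _ => hw⟩, hf⟩))
  · intro hq
    rcases hq with hq | hq
    · simp only [Set.mem_iUnion] at hq
      obtain ⟨v, hvN, hlab, hqf⟩ := hq
      obtain ⟨⟨r₁, r₂, hv⟩, hlastext, -⟩ := hvN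
      simp only [RE.lastExtentSet, Set.mem_iUnion] at hlastext
      obtain ⟨p, hpP, hpl⟩ := hlastext
      obtain ⟨t₁, ht₁, w₀, p', hs₁, hpdef⟩ := hpl
      obtain ⟨t₂, ht₂, q', y, hs₂, hqdef⟩ := hqf
      have ht₁' : t₁ = r₁ := by
        rw [sub_append, hv] at ht₁
        simpa using ht₁.symm
      have ht₂' : t₂ = r₂ := by
        rw [sub_append, hv] at ht₂
        simpa using ht₂.symm
      rw [ht₁'] at hs₁
      rw [ht₂'] at hs₂
      have hcatseq : RE.PosSeq (RE.cat r₁ r₂)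
          (((w₀ ++ [p']).map (Dir.L :: ·)) ++ ((q' :: y).map (Dir.R :: ·))) :=
        RE.PosSeq.cat hs₁ hs₂
      obtain ⟨W₁, W₂, hW⟩ := posSeq_context v hv hcatseq
      have hkey : W₁ ++ (((w₀ ++ [p']).map (Dir.L :: ·)) ++ ((q' :: y).map (Dir.R :: ·))).map
            (v ++ ·) ++ W₂
          = (W₁ ++ w₀.map (fun z => v ++ Dir.L :: z)) ++
              p :: q :: (y.map (fun z => v ++ Dir.R :: z) ++ W₂) := by
        subst hpdef hqdef
        simp [List.map_map, List.map_append, Function.comp_def, List.append_assoc]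
      rw [hkey] at hW
      simp only [RE.deltaSet, Set.mem_iUnion]
      exact ⟨p, hpP, hlab, _, _, hW⟩
    · simp only [Set.mem_iUnion] at hq
      obtain ⟨u, huN, hlab, u', hanc, hqf⟩ := hq
      obtain ⟨⟨r₁, hu⟩, -, ⟨p, hpP, hpl⟩, -⟩ := huN
      have hu'u : u' = u := by
        obtain ⟨hpre, -, hmin⟩ := hanc
        have h2 : u <+: u' := hmin u (List.prefix_refl _) ⟨r₁, hu⟩
        exact hpre.eq_of_length (Nat.le_antisymm hpre.length_le h2.length_le)
      rw [hu'u] at hqf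
      obtain ⟨t₁, ht₁, x, p', hs₁, hpdef⟩ := hpl
      obtain ⟨t₂, ht₂, q', y, hs₂, hqdef⟩ := hqf
      rw [hu, Option.some_inj] at ht₁ ht₂
      subst ht₁ ht₂
      have hstarseq : RE.PosSeq (RE.star r₁) ((x ++ [p']) ++ (q' :: y)) :=
        star_append hs₁ hs₂
      obtain ⟨W₁, W₂, hW⟩ := posSeq_context u hu hstarseq
      have hkey : W₁ ++ (((x ++ [p']) ++ (q' :: y)).map (u ++ ·)) ++ W₂
          = (W₁ ++ x.map (fun z => u ++ z)) ++
              p :: q :: (y.map (fun z => u ++ z) ++ W₂) := by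
        subst hpdef hqdef
        simp [List.map_append, List.append_assoc]
      rw [hkey] at hW
      simp only [RE.deltaSet, Set.mem_iUnion]
      exact ⟨p, hpP, hlab, _, _, hW⟩
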